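/- For every w ∈ Σ_n, every monomial x₁^{α₁}⋯x_n^{α_n} appearing with nonzero coefficient in the Schubert polynomial S_w satisfies α_i ≤ n−i for all i; that is, every monomial of S_w divides x^δ. Consequently S_w is its own normal form modulo the ideal generated by the elementary symmetric polynomials, with respect to the degree reverse lexicographic term order with x₁ < ⋯ < x_n. -/

import Mathlib

open MvPolynomial

noncomputable section

/-- The symmetric group `Σ_n` on `{0, …, n-1}` (0-indexed model of `{1, …, n}`). -/
abbrev Perm' (n : ℕ) := Equiv.Perm (Fin n)

/-- The length `ℓ(w)`: the number of inversions of `w`. -/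
def invLength {n : ℕ} (w : Perm' n) : ℕ :=
  (Finset.univ.filter (fun p : Fin n × Fin n => p.1 < p.2 ∧ w p.2 < w p.1)).card

/-- The longest permutation `w₀ = n … 2 1`. -/
def w0 (n : ℕ) : Perm' n := Fin.revPerm

/-- `u ⋖ w` in the Bruhat order: `w = u·(k,l)` where `k < l`, `u k < u l`, and no
position strictly between `k` and `l` has a `u`-value between `u k` and `u l`. -/
def BruhatCover {n : ℕ} (u w : Perm' n) : Prop :=
  ∃ k l : Fin n, k < l ∧ u k < u l ∧
    (∀ i : Fin n, k < i → i < l → ¬(u k < u i ∧ u i < u l)) ∧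
    w = u * Equiv.swap k l

/-- The Bruhat order, generated by its covers. -/
def BruhatLE {n : ℕ} : Perm' n → Perm' n → Prop :=
  Relation.ReflTransGen BruhatCover

/-- `u →^{(k,b)} w` is a labeled cover in the labeled Bruhat order (0-indexed):
`u ⋖ w` with `u⁻¹w = (i,j)`, `i ≤ k < j` and `b = u i`. -/
def IsLabeledCover {n : ℕ} (u w : Perm' n) (k b : ℕ) : Prop :=
  ∃ i j : Fin n, i < j ∧ u i < u j ∧
    (∀ m : Fin n, i < m → m < j → ¬(u i < u m ∧ u m < u j)) ∧
    w = u * Equiv.swap i j ∧ (i : ℕ) ≤ k ∧ k < (j : ℕ) ∧ b = (u i : ℕ)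

/-- Strict lexicographic order on labels `(k,b)`. -/
def lexLt (p q : ℕ × ℕ) : Prop := p.1 < q.1 ∨ (p.1 = q.1 ∧ p.2 < q.2)

/-- A saturated labeled chain of length `m` from `u` to `w` in the labeled Bruhat order. -/
structure LabeledChain (n m : ℕ) (u w : Perm' n) where
  c : Fin (m + 1) → Perm' n
  lab : Fin m → ℕ × ℕ
  c_zero : c 0 = u
  c_last : c (Fin.last m) = w
  step : ∀ i : Fin m, IsLabeledCover (c i.castSucc) (c i.succ) (lab i).1 (lab i).2

/-- A chain is increasing if its labels strictly increase in lexicographic order. -/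
def LabeledChain.Increasing {n m : ℕ} {u w : Perm' n} (γ : LabeledChain n m u w) : Prop :=
  ∀ i j : Fin m, i < j → lexLt (γ.lab i) (γ.lab j)

/-- The type of a chain: `α_k` counts labels with first coordinate `k`. -/
def chainType {n m : ℕ} {u w : Perm' n} (γ : LabeledChain n m u w) : Fin n → ℕ :=
  fun k => (Finset.univ.filter (fun i : Fin m => (γ.lab i).1 = (k : ℕ))).card

/-- `I_α(u,w)`: the number of increasing chains from `u` to `w` of type `α`. -/
def incChainCount (n : ℕ) (u w : Perm' n) (α : Fin n → ℕ) : ℕ :=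
  Nat.card ((m : ℕ) × {γ : LabeledChain n m u w // γ.Increasing ∧ chainType γ = α})

/-- The staircase monomial `x^δ = x₁^{n-1} x₂^{n-2} ⋯ x_{n-1}`. -/
def xDelta (n : ℕ) : MvPolynomial (Fin n) ℤ :=
  ∏ i : Fin n, X i ^ (n - 1 - (i : ℕ))

/-- `S` is the family of Schubert polynomials: `S w₀ = x^δ` and
`S w - s_i·(S w) = (x_i - x_{i+1}) · S (w s_i)` whenever `ℓ(w s_i) < ℓ(w)`. -/
def IsSchubertFamily (n : ℕ) (S : Perm' n → MvPolynomial (Fin n) ℤ) : Prop :=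
  S (w0 n) = xDelta n ∧
  ∀ (w : Perm' n) (i : ℕ) (h : i + 1 < n),
    invLength (w * Equiv.swap (⟨i, by omega⟩ : Fin n) ⟨i + 1, h⟩) < invLength w →
    S w - rename (Equiv.swap (⟨i, by omega⟩ : Fin n) ⟨i + 1, h⟩) (S w) =
      (X (⟨i, by omega⟩ : Fin n) - X ⟨i + 1, h⟩) *
        S (w * Equiv.swap (⟨i, by omega⟩ : Fin n) ⟨i + 1, h⟩)

/-- The ideal generated by the elementary symmetric polynomials `e₁, …, e_n`. -/
def symIdeal (n : ℕ) : Ideal (MvPolynomial (Fin n) ℤ) :=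
  Ideal.span ((fun k => esymm (Fin n) ℤ k) '' Set.Icc 1 n)

/-- `g` is the normal form of `f` modulo the ideal of elementary symmetric polynomials :
`f ≡ g` and every monomial of `g` divides `x^δ`.  (For the degree reverse lexicographic
term order with `x₁ < ⋯ < x_n`, the normal form is exactly the unique such `g`.) -/
def IsNormalForm (n : ℕ) (f g : MvPolynomial (Fin n) ℤ) : Prop :=
  f - g ∈ symIdeal n ∧ ∀ d ∈ g.support, ∀ i : Fin n, d i ≤ n - 1 - (i : ℕ)

def finSubEquiv {n N : ℕ} (h : n ≤ N) : Fin n ≃ {i : Fin N // (i : ℕ) < n} where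
  toFun i := ⟨Fin.castLE h i, i.isLt⟩
  invFun j := ⟨(j.1 : ℕ), j.2⟩
  left_inv i := rfl
  right_inv j := rfl

/-- The standard inclusion `Σ_n ⊂ Σ_N`, extending a permutation by fixed points. -/
def permIncl {n N : ℕ} (h : n ≤ N) (u : Perm' n) : Perm' N :=
  u.extendDomain (finSubEquiv h)

/-- `δ` as an exponent vector. -/
def deltaF (n : ℕ) : Fin n →₀ ℕ :=
  Finsupp.equivFunOnFinite.symm fun i => n - 1 - (i : ℕ)

/-- The type of a chain as an exponent vector. -/
def chainTypeF {n m : ℕ} {u w : Perm' n} (γ : LabeledChain n m u w) : Fin n →₀ ℕ :=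
  Finsupp.equivFunOnFinite.symm (chainType γ)

/-- `δ` as an integral exponent vector. -/
def deltaZ (n : ℕ) : Fin n →₀ ℤ :=
  Finsupp.equivFunOnFinite.symm fun i => ((n - 1 - (i : ℕ) : ℕ) : ℤ)

/-- The type of a chain as an integral exponent vector. -/
def chainTypeZ {n m : ℕ} {u w : Perm' n} (γ : LabeledChain n m u w) : Fin n →₀ ℤ :=
  Finsupp.equivFunOnFinite.symm fun k => ((chainType γ k : ℕ) : ℤ)

/-- The inclusion of polynomials into Laurent polynomials. -/
def toLaurent (n : ℕ) : MvPolynomial (Fin n) ℤ →+* AddMonoidAlgebra ℤ (Fin n →₀ ℤ) :=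
  AddMonoidAlgebra.mapDomainRingHom ℤ (Finsupp.mapRange.addMonoidHom (Nat.castAddMonoidHom ℤ))

/-- The complete homogeneous symmetric polynomial `h_a(x₁, …, x_k)` inside
`ℤ[x₁, …, x_n]` (variables are 0-indexed, so the first `k` variables are used). -/
def hpoly (n k a : ℕ) : MvPolynomial (Fin n) ℤ :=
  ∑ s ∈ (Finset.univ.filter (fun i : Fin n => (i : ℕ) < k)).sym a,
    ((s : Multiset (Fin n)).map X).prod

/-- `h_α = h_{α₁}(x₁) h_{α₂}(x₁,x₂) ⋯ h_{α_{n-1}}(x₁, …, x_{n-1})` (0-indexed `α`). -/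
def hAlpha (n : ℕ) (α : Fin n → ℕ) : MvPolynomial (Fin n) ℤ :=
  ∏ i : Fin n, hpoly n ((i : ℕ) + 1) (α i)

/- ## rc-graphs (0-indexed pairs: the paper's pair `(k,b)` is `(k-1, b-1)`) -/

/-- The linear order on rc-graph positions: `(k,b) ≤ (j,a)  ⇔  k < j, or k = j and b ≥ a`. -/
def rcLE (p q : ℕ × ℕ) : Prop := p.1 < q.1 ∨ (p.1 = q.1 ∧ q.2 ≤ p.2)

instance : DecidableRel rcLE := fun p q => by unfold rcLE; exact inferInstance
instance : IsTrans (ℕ × ℕ) rcLE :=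
  ⟨fun a b c h1 h2 => by unfold rcLE at h1 h2 ⊢; omega⟩
instance : IsAntisymm (ℕ × ℕ) rcLE :=
  ⟨fun a b h1 h2 => by unfold rcLE at h1 h2; rw [Prod.ext_iff]; omega⟩
instance : IsTotal (ℕ × ℕ) rcLE := ⟨fun a b => by unfold rcLE; omega⟩

/-- The adjacent transposition `s_{i+1} = (i, i+1)` (0-indexed positions). -/
def adjT (n : ℕ) (i : ℕ) : Perm' n :=
  if h : i + 1 < n then Equiv.swap ⟨i, by omega⟩ ⟨i + 1, h⟩ else 1

/-- The word `d(R)` of a set of positions: list its elements in the order `rcLE` and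
record `k + b` for each pair (0-indexed version of `k + b - 1`). -/
def rcWord (R : Finset (ℕ × ℕ)) : List ℕ :=
  (R.sort rcLE).map (fun p => p.1 + p.2)

/-- The permutation given by a word in the adjacent transpositions. -/
def wordPerm (n : ℕ) (l : List ℕ) : Perm' n :=
  (l.map (adjT n)).prod

/-- The permutation of a set of rc-positions. -/
def rcPerm (n : ℕ) (R : Finset (ℕ × ℕ)) : Perm' n := wordPerm n (rcWord R)

/-- `R` consists of valid rc-positions: (0-indexed) `k + b + 2 ≤ n`. -/
def IsRC (n : ℕ) (R : Finset (ℕ × ℕ)) : Prop := ∀ p ∈ R, p.1 + p.2 + 2 ≤ n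

/-- `R ∈ 𝓡(w)`: `R` is an rc-graph associated to `w`, i.e. `d(R)` is a reduced word for `w`. -/
def AssocRC (n : ℕ) (R : Finset (ℕ × ℕ)) (w : Perm' n) : Prop :=
  IsRC n R ∧ rcPerm n R = w ∧ R.card = invLength w

/-- All valid rc-positions for `Σ_n`. -/
def fullRC (n : ℕ) : Finset (ℕ × ℕ) :=
  (Finset.range n ×ˢ Finset.range n).filter (fun p => p.1 + p.2 + 2 ≤ n)

/-- One greedy step: adjoin the lexicographically smallest valid pair not in `R`. -/
def GreedyStep (n : ℕ) (R R' : Finset (ℕ × ℕ)) : Prop :=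
  ∃ p : ℕ × ℕ, p ∉ R ∧ p.1 + p.2 + 2 ≤ n ∧
    (∀ q : ℕ × ℕ, q.1 + q.2 + 2 ≤ n → q ∉ R → (p.1 < q.1 ∨ (p.1 = q.1 ∧ p.2 ≤ q.2))) ∧
    R' = insert p R

/-- The exponent of `x_i` in `x^R`. -/
def rcType (n : ℕ) (R : Finset (ℕ × ℕ)) : Fin n → ℕ :=
  fun i => (R.filter (fun p => p.1 = (i : ℕ))).card

/-- `γ = γ(R)`: the chain `γ` is produced from `R` by the greedy sequence. -/
def GreedyRel (n : ℕ) {m : ℕ} (w : Perm' n) (R : Finset (ℕ × ℕ))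
    (γ : LabeledChain n m w (w0 n)) : Prop :=
  ∃ Rs : ℕ → Finset (ℕ × ℕ), Rs 0 = R ∧
    (∀ i < m, GreedyStep n (Rs i) (Rs (i + 1))) ∧
    (∀ i : Fin m, γ.lab i ∉ Rs (i : ℕ) ∧ Rs ((i : ℕ) + 1) = insert (γ.lab i) (Rs (i : ℕ))) ∧
    (∀ i : Fin (m + 1), rcPerm n (Rs (i : ℕ)) = γ.c i)

/- ### Auxiliary lemmas for Statement 13 -/

private lemma swap_val' {n : ℕ} {i : ℕ} (h : i + 1 < n) (c : Fin n) :
    ((Equiv.swap (⟨i, Nat.lt_of_succ_lt h⟩ : Fin n) ⟨i + 1, h⟩ c : Fin n) : ℕ)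
      = if (c : ℕ) = i then i + 1 else if (c : ℕ) = i + 1 then i else c := by
  rcases eq_or_ne c ⟨i, Nat.lt_of_succ_lt h⟩ with rfl | hc1
  · simp [Equiv.swap_apply_left]
  · rcases eq_or_ne c ⟨i + 1, h⟩ with rfl | hc2
    · simp [Equiv.swap_apply_right, Fin.ext_iff]
    · rw [Equiv.swap_apply_of_ne_of_ne hc1 hc2]
      rw [Fin.ne_iff_vne] at hc1 hc2
      simp [hc1, hc2]

private lemma card_swap_aux' {n : ℕ} (w s : Perm' n) (hss : ∀ x, s (s x) = x)
    (P : Fin n → Fin n → Prop) [DecidableRel P] :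
    (Finset.univ.filter (fun p : Fin n × Fin n => p.1 < p.2 ∧ P ((w * s) p.1) ((w * s) p.2))).card =
    (Finset.univ.filter (fun p : Fin n × Fin n => s p.1 < s p.2 ∧ P (w p.1) (w p.2))).card := by
  apply Finset.card_bij' (fun p _ => (s p.1, s p.2)) (fun p _ => (s p.1, s p.2)) <;>
    intro p hp <;>
    simp only [Finset.mem_filter, Finset.mem_univ, true_and, hss] at hp ⊢ <;>
    simp_all [Prod.ext_iff]

private def coLength {n : ℕ} (w : Perm' n) : ℕ :=
  (Finset.univ.filter (fun p : Fin n × Fin n => p.1 < p.2 ∧ w p.1 < w p.2)).card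

private lemma invLength_swap_succ {n : ℕ} (w : Perm' n) {i : ℕ} (h : i + 1 < n)
    (hlt : w ⟨i, Nat.lt_of_succ_lt h⟩ < w ⟨i + 1, h⟩) :
    invLength (w * Equiv.swap (⟨i, Nat.lt_of_succ_lt h⟩ : Fin n) ⟨i + 1, h⟩)
      = invLength w + 1 := by
  have hss : ∀ z, Equiv.swap (⟨i, Nat.lt_of_succ_lt h⟩ : Fin n) ⟨i + 1, h⟩
      (Equiv.swap (⟨i, Nat.lt_of_succ_lt h⟩ : Fin n) ⟨i + 1, h⟩ z) = z :=
    fun z => Equiv.swap_apply_self _ _ z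
  unfold invLength
  rw [card_swap_aux' w _ hss (fun a b => b < a)]
  have hkey : (Finset.univ.filter (fun p : Fin n × Fin n =>
        Equiv.swap (⟨i, Nat.lt_of_succ_lt h⟩ : Fin n) ⟨i + 1, h⟩ p.1 <
          Equiv.swap (⟨i, Nat.lt_of_succ_lt h⟩ : Fin n) ⟨i + 1, h⟩ p.2 ∧ w p.2 < w p.1))
      = insert ((⟨i + 1, h⟩ : Fin n), (⟨i, Nat.lt_of_succ_lt h⟩ : Fin n))
          (Finset.univ.filter (fun p : Fin n × Fin n => p.1 < p.2 ∧ w p.2 < w p.1)) := by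
    ext ⟨a, b⟩
    simp only [Finset.mem_filter, Finset.mem_insert, Finset.mem_univ, true_and, Prod.mk.injEq]
    have hva := swap_val' h a
    have hvb := swap_val' h b
    constructor
    · rintro ⟨h1, h2⟩
      by_cases hc : (a : ℕ) = i + 1 ∧ (b : ℕ) = i
      · exact Or.inl ⟨Fin.ext hc.1, Fin.ext hc.2⟩
      · refine Or.inr ⟨?_, h2⟩
        rw [Fin.lt_def] at h1 ⊢
        rw [hva, hvb] at h1
        split_ifs at h1 <;> omega
    · rintro (⟨rfl, rfl⟩ | ⟨h1, h2⟩)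
      · exact ⟨by rw [Fin.lt_def, hva, hvb]; norm_num, hlt⟩
      · refine ⟨?_, h2⟩
        by_cases hc : (a : ℕ) = i ∧ (b : ℕ) = i + 1
        · exact absurd h2 (by
            have ha : a = (⟨i, Nat.lt_of_succ_lt h⟩ : Fin n) := Fin.ext hc.1
            have hb : b = (⟨i + 1, h⟩ : Fin n) := Fin.ext hc.2
            rw [ha, hb]; exact asymm hlt)
        · rw [Fin.lt_def] at h1 ⊢
          rw [hva, hvb]
          split_ifs <;> omega
  rw [hkey, Finset.card_insert_of_notMem]
  simp only [Finset.mem_filter, Finset.mem_univ, true_and, not_and]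
  intro hlt'
  exact absurd hlt' (by rw [Fin.mk_lt_mk]; omega)

private lemma coLength_swap_pred {n : ℕ} (w : Perm' n) {i : ℕ} (h : i + 1 < n)
    (hlt : w ⟨i, Nat.lt_of_succ_lt h⟩ < w ⟨i + 1, h⟩) :
    coLength w
      = coLength (w * Equiv.swap (⟨i, Nat.lt_of_succ_lt h⟩ : Fin n) ⟨i + 1, h⟩) + 1 := by
  have hss : ∀ z, Equiv.swap (⟨i, Nat.lt_of_succ_lt h⟩ : Fin n) ⟨i + 1, h⟩
      (Equiv.swap (⟨i, Nat.lt_of_succ_lt h⟩ : Fin n) ⟨i + 1, h⟩ z) = z :=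
    fun z => Equiv.swap_apply_self _ _ z
  unfold coLength
  rw [card_swap_aux' w _ hss (fun a b => a < b)]
  have hkey : (Finset.univ.filter (fun p : Fin n × Fin n => p.1 < p.2 ∧ w p.1 < w p.2))
      = insert ((⟨i, Nat.lt_of_succ_lt h⟩ : Fin n), (⟨i + 1, h⟩ : Fin n))
          (Finset.univ.filter (fun p : Fin n × Fin n =>
            Equiv.swap (⟨i, Nat.lt_of_succ_lt h⟩ : Fin n) ⟨i + 1, h⟩ p.1 <
              Equiv.swap (⟨i, Nat.lt_of_succ_lt h⟩ : Fin n) ⟨i + 1, h⟩ p.2 ∧ w p.1 < w p.2)) := by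
    ext ⟨a, b⟩
    simp only [Finset.mem_filter, Finset.mem_insert, Finset.mem_univ, true_and, Prod.mk.injEq]
    have hva := swap_val' h a
    have hvb := swap_val' h b
    constructor
    · rintro ⟨h1, h2⟩
      by_cases hc : (a : ℕ) = i ∧ (b : ℕ) = i + 1
      · exact Or.inl ⟨Fin.ext hc.1, Fin.ext hc.2⟩
      · refine Or.inr ⟨?_, h2⟩
        rw [Fin.lt_def] at h1 ⊢
        rw [hva, hvb]
        split_ifs <;> omega
    · rintro (⟨rfl, rfl⟩ | ⟨h1, h2⟩)
      · exact ⟨by rw [Fin.mk_lt_mk]; omega, hlt⟩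
      · refine ⟨?_, h2⟩
        by_cases hc : (a : ℕ) = i + 1 ∧ (b : ℕ) = i
        · exact absurd h2 (by
            have ha : a = (⟨i + 1, h⟩ : Fin n) := Fin.ext hc.1
            have hb : b = (⟨i, Nat.lt_of_succ_lt h⟩ : Fin n) := Fin.ext hc.2
            rw [ha, hb]; exact asymm hlt)
        · rw [Fin.lt_def] at h1 ⊢
          rw [hva, hvb] at h1
          split_ifs at h1 <;> omega
  rw [hkey, Finset.card_insert_of_notMem]
  simp only [Finset.mem_filter, Finset.mem_univ, true_and, not_and]
  intro hlt'
  rw [Equiv.swap_apply_left, Equiv.swap_apply_right, Fin.mk_lt_mk] at hlt'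
  omega

private lemma eq_w0_of_coLength_zero {n : ℕ} (w : Perm' n) (h0 : coLength w = 0) : w = w0 n := by
  have hno : ∀ p q : Fin n, p < q → w q < w p := by
    intro p q hpq
    unfold coLength at h0
    rw [Finset.card_eq_zero, Finset.filter_eq_empty_iff] at h0
    have := h0 (Finset.mem_univ (p, q))
    simp only [hpq, true_and, not_lt] at this
    rcases lt_or_eq_of_le this with h' | h'
    · exact h'
    · exact absurd (w.injective h') (ne_of_gt hpq)
  have hsm : StrictMono (fun j : Fin n => w (Fin.rev j)) := by
    intro a b hab
    exact hno _ _ (Fin.rev_lt_rev.mpr hab)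
  have hrange : Set.range (fun j : Fin n => w (Fin.rev j)) = Set.range (id : Fin n → Fin n) := by
    rw [Set.range_id, Set.range_eq_univ]
    exact w.surjective.comp Fin.rev_surjective
  haveI : WellFoundedLT (Fin n) := inferInstance
  have hid := (hsm.range_inj strictMono_id).mp hrange
  apply Equiv.ext
  intro x
  have := congrFun hid (Fin.rev x)
  rw [Fin.rev_rev] at this
  simpa [w0] using this

private lemma exists_ascent {n : ℕ} (w : Perm' n) (hw : coLength w ≠ 0) :
    ∃ (i : ℕ) (h : i + 1 < n), w ⟨i, Nat.lt_of_succ_lt h⟩ < w ⟨i + 1, h⟩ := by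
  by_contra hc
  push_neg at hc
  apply hw
  have hadj : ∀ (i : ℕ) (h : i + 1 < n), w ⟨i + 1, h⟩ < w ⟨i, Nat.lt_of_succ_lt h⟩ := by
    intro i h
    rcases lt_trichotomy (w ⟨i + 1, h⟩) (w ⟨i, Nat.lt_of_succ_lt h⟩) with h' | h' | h'
    · exact h'
    · exact absurd (w.injective h') (by simp [Fin.ext_iff])
    · exact absurd h' (not_lt.mpr (hc i h))
  have hdec : ∀ (k : ℕ) (p q : Fin n), (q : ℕ) = (p : ℕ) + k + 1 → w q < w p := by
    intro k
    induction k with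
    | zero =>
      intro p q hq
      have h : (p : ℕ) + 1 < n := hq ▸ q.isLt
      have hq' : q = ⟨(p : ℕ) + 1, h⟩ := Fin.ext (show (q : ℕ) = (p : ℕ) + 1 by omega)
      rw [hq']
      exact hadj (p : ℕ) h
    | succ k ih =>
      intro p q hq
      have hr1 : (p : ℕ) + k + 1 < n := by omega
      have hh : (p : ℕ) + k + 1 + 1 < n := by omega
      have h1 : w q < w ⟨(p : ℕ) + k + 1, hr1⟩ := by
        have hq' : q = ⟨(p : ℕ) + k + 1 + 1, hh⟩ :=
          Fin.ext (show (q : ℕ) = (p : ℕ) + k + 1 + 1 by omega)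
        rw [hq']
        exact hadj ((p : ℕ) + k + 1) hh
      exact lt_trans h1 (ih p ⟨(p : ℕ) + k + 1, hr1⟩ rfl)
  unfold coLength
  rw [Finset.card_eq_zero, Finset.filter_eq_empty_iff]
  intro p _
  simp only [not_and, not_lt]
  intro hlt
  exact le_of_lt (hdec ((p.2 : ℕ) - (p.1 : ℕ) - 1) p.1 p.2 (by omega))

private lemma xDelta_monomial (n : ℕ) : xDelta n = monomial (deltaF n) 1 := by
  have h1 : xDelta n = ∏ i : Fin n, X i ^ (deltaF n i) := by
    unfold xDelta
    exact Finset.prod_congr rfl fun i _ => by simp [deltaF]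
  rw [h1, ← prod_X_pow_eq_monomial]
  exact (Finset.prod_subset (Finset.subset_univ _) (by
    intro x _ hx
    rw [Finsupp.notMem_support_iff.mp hx, pow_zero])).symm

private lemma coeff_zero_of_bad {n : ℕ} (i j : Fin n) (hij : i ≠ j)
    (g h : MvPolynomial (Fin n) ℤ) (hh : (X i - X j) * g = h)
    (Bad : (Fin n →₀ ℕ) → Prop)
    (hstep : ∀ d : Fin n →₀ ℕ, Bad d → Bad (d + Finsupp.single i 1 - Finsupp.single j 1))
    (hzero : ∀ d : Fin n →₀ ℕ, Bad d → coeff (d + Finsupp.single i 1) h = 0) :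
    ∀ d : Fin n →₀ ℕ, Bad d → coeff d g = 0 := by
  have main : ∀ b : ℕ, ∀ d : Fin n →₀ ℕ, d j = b → Bad d → coeff d g = 0 := by
    intro b
    induction b using Nat.strong_induction_on with
    | _ b ih =>
      intro d hdj hd
      have h0 : coeff (d + Finsupp.single i 1) ((X i - X j) * g) = 0 := by
        rw [hh]; exact hzero d hd
      have e1 : coeff (d + Finsupp.single i 1) (X i * g) = coeff d g := by
        rw [add_comm]; exact coeff_X_mul d i g
      rw [sub_mul, coeff_sub, e1, coeff_X_mul'] at h0
      have hsij : (Finsupp.single i 1 : Fin n →₀ ℕ) j = 0 := Finsupp.single_eq_of_ne' hij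
      by_cases hb : d j = 0
      · rw [if_neg (by simp [Finsupp.mem_support_iff, hb, hsij])] at h0
        omega
      · rw [if_pos (by simp [Finsupp.mem_support_iff, hsij]; omega)] at h0
        have hbad' := hstep d hd
        have hj' : ((d + Finsupp.single i 1 - Finsupp.single j 1 : Fin n →₀ ℕ)) j = b - 1 := by
          rw [Finsupp.tsub_apply, Finsupp.add_apply, hsij, Finsupp.single_eq_same, hdj, add_zero]
        rw [ih (b - 1) (by omega) _ hj' hbad'] at h0
        omega
  exact fun d hd => main (d j) d rfl hd

private lemma step_bound {n : ℕ} {i : ℕ} (h : i + 1 < n)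
    (f g : MvPolynomial (Fin n) ℤ)
    (heq : f - rename (⇑(Equiv.swap (⟨i, Nat.lt_of_succ_lt h⟩ : Fin n) ⟨i + 1, h⟩)) f
        = (X (⟨i, Nat.lt_of_succ_lt h⟩ : Fin n) - X ⟨i + 1, h⟩) * g)
    (hf : ∀ d ∈ f.support, ∀ k : Fin n, d k ≤ n - 1 - (k : ℕ)) :
    ∀ d ∈ g.support, ∀ k : Fin n, d k ≤ n - 1 - (k : ℕ) := by
  set x : Fin n := ⟨i, Nat.lt_of_succ_lt h⟩ with hxdef
  set y : Fin n := ⟨i + 1, h⟩ with hydef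
  have hvx : (x : ℕ) = i := rfl
  have hvy : (y : ℕ) = i + 1 := rfl
  have hxy : x ≠ y := by rw [Fin.ne_iff_vne, hvx, hvy]; omega
  have hsupp : ∀ d ∈ (f - rename (⇑(Equiv.swap x y)) f).support, ∀ k : Fin n,
      d k ≤ if (k : ℕ) = i + 1 then n - 1 - i else n - 1 - (k : ℕ) := by
    intro d hd k
    rcases Finset.mem_union.mp (MvPolynomial.support_sub _ _ _ hd) with hd' | hd'
    · have := hf d hd' k
      split_ifs with hk <;> omega
    · rw [support_rename_of_injective (Equiv.injective _)] at hd'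
      obtain ⟨d2, hd2, rfl⟩ := Finset.mem_image.mp hd'
      have hmd : Finsupp.mapDomain (⇑(Equiv.swap x y)) d2 k = d2 (Equiv.swap x y k) := by
        conv_lhs => rw [← Equiv.swap_apply_self x y k]
        exact Finsupp.mapDomain_apply (Equiv.injective _) d2 _
      rw [hmd]
      have hbound := hf d2 hd2 (Equiv.swap x y k)
      rw [swap_val' h k] at hbound
      split_ifs at hbound ⊢ <;> omega
  have hA : ∀ d : Fin n →₀ ℕ, n - 1 - i ≤ d x → coeff d g = 0 := by
    refine coeff_zero_of_bad x y hxy g _ heq.symm (fun d => n - 1 - i ≤ d x) ?_ ?_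
    · intro d hd
      rw [Finsupp.tsub_apply, Finsupp.add_apply, Finsupp.single_eq_same,
        Finsupp.single_eq_of_ne' (Ne.symm hxy)]
      omega
    · intro d hd
      by_contra hne
      have := hsupp _ (mem_support_iff.mpr hne) x
      rw [if_neg (by rw [hvx]; omega), Finsupp.add_apply, Finsupp.single_eq_same] at this
      omega
  have hB : ∀ d : Fin n →₀ ℕ, n - 1 - (i + 1) < d y → coeff d g = 0 := by
    have hh' : (X y - X x) * g = -(f - rename (⇑(Equiv.swap x y)) f) := by
      rw [heq]; ring
    refine coeff_zero_of_bad y x (Ne.symm hxy) g _ hh' (fun d => n - 1 - (i + 1) < d y) ?_ ?_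
    · intro d hd
      rw [Finsupp.tsub_apply, Finsupp.add_apply, Finsupp.single_eq_same,
        Finsupp.single_eq_of_ne' hxy]
      omega
    · intro d hd
      rw [coeff_neg, neg_eq_zero]
      by_contra hne
      have := hsupp _ (mem_support_iff.mpr hne) y
      rw [if_pos hvy, Finsupp.add_apply, Finsupp.single_eq_same] at this
      omega
  have hC : ∀ k : Fin n, k ≠ x → k ≠ y →
      ∀ d : Fin n →₀ ℕ, n - 1 - (k : ℕ) < d k → coeff d g = 0 := by
    intro k hkx hky
    refine coeff_zero_of_bad x y hxy g _ heq.symm (fun d => n - 1 - (k : ℕ) < d k) ?_ ?_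
    · intro d hd
      rw [Finsupp.tsub_apply, Finsupp.add_apply,
        Finsupp.single_eq_of_ne' (Ne.symm hkx), Finsupp.single_eq_of_ne' (Ne.symm hky)]
      omega
    · intro d hd
      by_contra hne
      have := hsupp _ (mem_support_iff.mpr hne) k
      have hky' : (k : ℕ) ≠ i + 1 := by
        rw [Fin.ne_iff_vne, hvy] at hky; exact hky
      rw [if_neg hky', Finsupp.add_apply, Finsupp.single_eq_of_ne' (Ne.symm hkx)] at this
      omega
  intro d hd k
  have hdk := mem_support_iff.mp hd
  rcases eq_or_ne k x with rfl | hkx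
  · by_contra hcon
    exact hdk (hA d (by omega))
  · rcases eq_or_ne k y with rfl | hky
    · by_contra hcon
      exact hdk (hB d (by omega))
    · by_contra hcon
      exact hdk (hC k hkx hky d (by omega))

private lemma schubert_support_le {n : ℕ} (S : Perm' n → MvPolynomial (Fin n) ℤ)
    (hS : IsSchubertFamily n S) :
    ∀ (w : Perm' n), ∀ d ∈ (S w).support, ∀ k : Fin n, d k ≤ n - 1 - (k : ℕ) := by
  suffices H : ∀ (m : ℕ) (w : Perm' n), coLength w = m →
      ∀ d ∈ (S w).support, ∀ k : Fin n, d k ≤ n - 1 - (k : ℕ) from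
    fun w => H (coLength w) w rfl
  intro m
  induction m using Nat.strong_induction_on with
  | _ m ih =>
  intro w hm d hd k
  rcases Nat.eq_zero_or_pos m with rfl | hm0
  · have hw0 : w = w0 n := eq_w0_of_coLength_zero w hm
    rw [hw0, hS.1, xDelta_monomial, support_monomial, if_neg one_ne_zero,
      Finset.mem_singleton] at hd
    subst hd
    simp [deltaF]
  · obtain ⟨i, h, hlt⟩ := exists_ascent w (by omega)
    have hinv : invLength
        ((w * Equiv.swap (⟨i, Nat.lt_of_succ_lt h⟩ : Fin n) ⟨i + 1, h⟩) *
          Equiv.swap (⟨i, Nat.lt_of_succ_lt h⟩ : Fin n) ⟨i + 1, h⟩)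
        < invLength (w * Equiv.swap (⟨i, Nat.lt_of_succ_lt h⟩ : Fin n) ⟨i + 1, h⟩) := by
      rw [mul_assoc, Equiv.swap_mul_self, mul_one, invLength_swap_succ w h hlt]
      omega
    have heq := hS.2 (w * Equiv.swap (⟨i, Nat.lt_of_succ_lt h⟩ : Fin n) ⟨i + 1, h⟩) i h hinv
    rw [mul_assoc, Equiv.swap_mul_self, mul_one] at heq
    have hco := coLength_swap_pred w h hlt
    have hf := ih (coLength (w * Equiv.swap (⟨i, Nat.lt_of_succ_lt h⟩ : Fin n) ⟨i + 1, h⟩))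
      (by omega) _ rfl
    exact step_bound h _ (S w) heq hf d hd k

/-- Every monomial of a Schubert polynomial `S_w` divides `x^δ`;
consequently `S_w` is its own normal form modulo the ideal of elementary symmetric
polynomials. -/
theorem schubert_is_own_normal_form (n : ℕ)
    (S : Perm' n → MvPolynomial (Fin n) ℤ) (hS : IsSchubertFamily n S)
    (w : Perm' n) :
    (∀ d ∈ (S w).support, ∀ i : Fin n, d i ≤ n - 1 - (i : ℕ)) ∧
    IsNormalForm n (S w) (S w) := by
  have h1 := schubert_support_le S hS w
  exact ⟨h1, by rw [sub_self]; exact (symIdeal n).zero_mem, h1⟩
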